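/- arXiv:1011.0241 — 2 statements merged into one kernel-verified Lean document; each statement's English description precedes it below -/
import Mathlib

section
/- Let Φ be a real m×n matrix, Θ a real m×q matrix, and let x_1,…,x_N ∈ ℝⁿ and b_1,…,b_N ∈ ℝ^q be finite families such that Φ xᵢ = Θ bᵢ for every i = 1,…,N. Define C_sr = Σᵢ xᵢ bᵢᵀ (an n×q matrix) and C_rr = Σᵢ bᵢ bᵢᵀ (a q×q matrix), and assume C_rr is invertible. Then, with RM = C_sr · C_rr⁻¹, one has Θ = Φ · RM. -/
open Matrix BigOperators

/-- **Theorem 1 (finite-sample form).** If `Φ xᵢ = Θ bᵢ` for all `i`, and the response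
autocorrelation matrix `C_rr = Σᵢ bᵢ bᵢᵀ` is invertible, then with
`RM = C_sr · C_rr⁻¹` (where `C_sr = Σᵢ xᵢ bᵢᵀ`) we have `Θ = Φ · RM`. -/
theorem acs_theorem1_finite
    {m n q N : ℕ}
    (Φ : Matrix (Fin m) (Fin n) ℝ) (Θ : Matrix (Fin m) (Fin q) ℝ)
    (x : Fin N → Matrix (Fin n) (Fin 1) ℝ) (b : Fin N → Matrix (Fin q) (Fin 1) ℝ)
    (hmeas : ∀ i, Φ * x i = Θ * b i)
    (Csr : Matrix (Fin n) (Fin q) ℝ) (hCsr : Csr = ∑ i, x i * (b i)ᵀ)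
    (Crr : Matrix (Fin q) (Fin q) ℝ) (hCrr : Crr = ∑ i, b i * (b i)ᵀ)
    (hinv : IsUnit Crr)
    (RM : Matrix (Fin n) (Fin q) ℝ) (hRM : RM = Csr * Crr⁻¹) :
    Θ = Φ * RM := by
  have key : Φ * Csr = Θ * Crr := by
    rw [hCsr, hCrr, Matrix.mul_sum, Matrix.mul_sum]
    refine Finset.sum_congr rfl fun i _ => ?_
    rw [← Matrix.mul_assoc, ← Matrix.mul_assoc, hmeas i]
  rw [hRM, ← Matrix.mul_assoc, key, Matrix.mul_assoc,
    Matrix.mul_nonsing_inv _ (Matrix.isUnit_iff_isUnit_det Crr |>.mp hinv),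
    Matrix.mul_one]
end

section
/- Let (Ω, 𝒜, μ) be a probability space, Φ a real m×n matrix, Θ a real m×q matrix, and let X : Ω → ℝⁿ and B : Ω → ℝ^q be measurable maps such that each entry of the matrix-valued map ω ↦ X(ω) B(ω)ᵀ and of ω ↦ B(ω) B(ω)ᵀ is integrable, and such that Φ X(ω) = Θ B(ω) for μ-almost every ω. Define C_sr to be the n×q matrix with entries (C_sr)_{jk} = ∫ X(ω)_j B(ω)_k dμ and C_rr the q×q matrix with entries (C_rr)_{kl} = ∫ B(ω)_k B(ω)_l dμ, and assume C_rr is invertible. Then, with RM = C_sr · C_rr⁻¹, one has Θ = Φ · RM. -/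
open Matrix MeasureTheory BigOperators

/-- **Theorem 1 (ensemble/expectation form).** Let `(Ω, 𝒜, μ)` be a probability space and
`X : Ω → ℝⁿ`, `B : Ω → ℝ^q` measurable maps with entrywise-integrable `X Bᵀ` and `B Bᵀ`,
such that `Φ X = Θ B` almost everywhere.  If `C_rr = E[B Bᵀ]` is invertible, then with
`C_sr = E[X Bᵀ]` and `RM = C_sr · C_rr⁻¹` we have `Θ = Φ · RM`. -/
theorem acs_theorem1_ensemble
    {m n q : ℕ} {Ω : Type*} [MeasurableSpace Ω]
    (μ : Measure Ω) [IsProbabilityMeasure μ]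
    (Φ : Matrix (Fin m) (Fin n) ℝ) (Θ : Matrix (Fin m) (Fin q) ℝ)
    (X : Ω → Fin n → ℝ) (B : Ω → Fin q → ℝ)
    (hXmeas : Measurable X) (hBmeas : Measurable B)
    (hXBint : ∀ j k, Integrable (fun ω => X ω j * B ω k) μ)
    (hBBint : ∀ k l, Integrable (fun ω => B ω k * B ω l) μ)
    (hmeas : ∀ᵐ ω ∂μ, Φ.mulVec (X ω) = Θ.mulVec (B ω))
    (Csr : Matrix (Fin n) (Fin q) ℝ)
    (hCsr : Csr = Matrix.of fun j k => ∫ ω, X ω j * B ω k ∂μ)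
    (Crr : Matrix (Fin q) (Fin q) ℝ)
    (hCrr : Crr = Matrix.of fun k l => ∫ ω, B ω k * B ω l ∂μ)
    (hinv : IsUnit Crr)
    (RM : Matrix (Fin n) (Fin q) ℝ) (hRM : RM = Csr * Crr⁻¹) :
    Θ = Φ * RM := by
  have key : Φ * Csr = Θ * Crr := by
    ext i l
    have h1 : (Φ * Csr) i l = ∫ ω, (∑ j, Φ i j * X ω j) * B ω l ∂μ := by
      rw [hCsr]
      simp only [Matrix.mul_apply, Matrix.of_apply]
      simp_rw [← MeasureTheory.integral_const_mul]
      rw [← integral_finset_sum]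
      · congr 1; ext ω; rw [Finset.sum_mul]; congr 1; ext j; ring
      · intro j _; exact (hXBint j l).const_mul _
    have h2 : (Θ * Crr) i l = ∫ ω, (∑ k, Θ i k * B ω k) * B ω l ∂μ := by
      rw [hCrr]
      simp only [Matrix.mul_apply, Matrix.of_apply]
      simp_rw [← MeasureTheory.integral_const_mul]
      rw [← integral_finset_sum]
      · congr 1; ext ω; rw [Finset.sum_mul]; congr 1; ext k; ring
      · intro k _; exact (hBBint k l).const_mul _
    rw [h1, h2]
    apply integral_congr_ae
    filter_upwards [hmeas] with ω hω
    have := congrFun hω i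
    simpa [Matrix.mulVec, dotProduct] using congrArg (· * B ω l) this
  have : Φ * RM = Θ := by
    rw [hRM, ← Matrix.mul_assoc, key, Matrix.mul_assoc,
      Matrix.mul_nonsing_inv _ ((Matrix.isUnit_iff_isUnit_det Crr).mp hinv), Matrix.mul_one]
  exact this.symm
end
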